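/- For every real h, T(h, 1) = (1/2) Φ(h) (1 − Φ(h)). -/

import Mathlib

open Real MeasureTheory Set Metric

/-- Owen's T function. -/
noncomputable def OwenT (h a : ℝ) : ℝ :=
  (1 / (2 * Real.pi)) * ∫ x in (0:ℝ)..a, Real.exp (-h ^ 2 * (1 + x ^ 2) / 2) / (1 + x ^ 2)

/-- Standard normal cdf. -/
noncomputable def stdCdf (x : ℝ) : ℝ :=
  ∫ t in Set.Iic x, Real.exp (-t ^ 2 / 2) / Real.sqrt (2 * Real.pi)

lemma gauss_int : Integrable (fun t : ℝ => Real.exp (-t ^ 2 / 2)) := by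
  have : (fun t : ℝ => Real.exp (-t ^ 2 / 2)) = fun t : ℝ => Real.exp (-(1/2 : ℝ) * t ^ 2) := by
    funext t; ring_nf
  rw [this]
  exact integrable_exp_neg_mul_sq (by norm_num)

lemma stdCdf_zero : stdCdf 0 = 1 / 2 := by
  have h1 : (∫ t in Iic (0:ℝ), Real.exp (-t ^ 2 / 2))
      = ∫ t in Ioi (0:ℝ), Real.exp (-t ^ 2 / 2) := by
    have := integral_comp_neg_Iic (0:ℝ) (fun t : ℝ => Real.exp (-t ^ 2 / 2))
    simpa [neg_sq] using this
  have h2 : (∫ t in Ioi (0:ℝ), Real.exp (-t ^ 2 / 2)) = Real.sqrt (2 * π) / 2 := by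
    have h := integral_gaussian_Ioi (1/2)
    have he : ∀ x : ℝ, -(1/2 : ℝ) * x ^ 2 = -x ^ 2 / 2 := fun x => by ring
    simp_rw [he] at h
    rw [h, show π / (1/2 : ℝ) = 2 * π by ring]
  have sne : Real.sqrt (2 * π) ≠ 0 := by positivity
  rw [stdCdf, MeasureTheory.integral_div, h1, h2]
  field_simp

lemma stdCdf_eq (h : ℝ) :
    stdCdf h = 1 / 2 + (∫ u in (0:ℝ)..h, Real.exp (-u ^ 2 / 2)) / Real.sqrt (2 * π) := by
  have hint := gauss_int.div_const (Real.sqrt (2 * π))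
  have key := intervalIntegral.integral_Iic_sub_Iic (μ := volume)
    (f := fun t : ℝ => Real.exp (-t ^ 2 / 2) / Real.sqrt (2 * π))
    hint.integrableOn hint.integrableOn (a := 0) (b := h)
  have : stdCdf h - stdCdf 0
      = ∫ u in (0:ℝ)..h, Real.exp (-u ^ 2 / 2) / Real.sqrt (2 * π) := key
  rw [intervalIntegral.integral_div] at this
  rw [stdCdf_zero] at this
  linarith

lemma stdCdf_hasDerivAt (h : ℝ) :
    HasDerivAt stdCdf (Real.exp (-h ^ 2 / 2) / Real.sqrt (2 * π)) h := by
  have hc : Continuous fun t : ℝ => Real.exp (-t ^ 2 / 2) / Real.sqrt (2 * π) := by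
    fun_prop
  have key : HasDerivAt (fun y : ℝ => ∫ u in (0:ℝ)..y, Real.exp (-u ^ 2 / 2) / Real.sqrt (2 * π))
      (Real.exp (-h ^ 2 / 2) / Real.sqrt (2 * π)) h :=
    intervalIntegral.integral_hasDerivAt_right (hc.intervalIntegrable _ _)
      (hc.stronglyMeasurableAtFilter _ _) hc.continuousAt
  have hfun : stdCdf = fun y : ℝ =>
      1 / 2 + ∫ u in (0:ℝ)..y, Real.exp (-u ^ 2 / 2) / Real.sqrt (2 * π) := by
    funext y
    rw [stdCdf_eq, intervalIntegral.integral_div]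
  rw [hfun]
  simpa using key.const_add (1/2 : ℝ)

lemma owen_integral_hasDerivAt (h : ℝ) :
    HasDerivAt (fun y : ℝ => ∫ x in (0:ℝ)..1, Real.exp (-y ^ 2 * (1 + x ^ 2) / 2) / (1 + x ^ 2))
      (-Real.exp (-h ^ 2 / 2) * ∫ u in (0:ℝ)..h, Real.exp (-u ^ 2 / 2)) h := by
  have contF : ∀ y : ℝ, Continuous fun x : ℝ => Real.exp (-y ^ 2 * (1 + x ^ 2) / 2) / (1 + x ^ 2) := by
    intro y
    apply Continuous.div
    · fun_prop
    · fun_prop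
    · intro x; positivity
  have contF' : ∀ y : ℝ, Continuous fun x : ℝ => -y * Real.exp (-y ^ 2 * (1 + x ^ 2) / 2) := by
    intro y; fun_prop
  have key := intervalIntegral.hasDerivAt_integral_of_dominated_loc_of_deriv_le
    (μ := volume) (a := 0) (b := 1)
    (F := fun y x => Real.exp (-y ^ 2 * (1 + x ^ 2) / 2) / (1 + x ^ 2))
    (F' := fun y x => -y * Real.exp (-y ^ 2 * (1 + x ^ 2) / 2))
    (x₀ := h) (bound := fun _ => |h| + 1) (s := ball h 1) (ball_mem_nhds h one_pos)
    (Filter.Eventually.of_forall fun y => (contF y).aestronglyMeasurable)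
    ((contF h).intervalIntegrable _ _)
    (contF' h).aestronglyMeasurable
    (Filter.Eventually.of_forall fun t => fun _ y hy => by
      have hexp : Real.exp (-y ^ 2 * (1 + t ^ 2) / 2) ≤ 1 := by
        rw [Real.exp_le_one_iff]
        have h1 : 0 ≤ y ^ 2 * (1 + t ^ 2) := by positivity
        nlinarith
      have hy' : |y| ≤ |h| + 1 := by
        have h1 : |y| - |h| ≤ |y - h| := abs_sub_abs_le_abs_sub y h
        have h2 : |y - h| < 1 := by simpa [Real.dist_eq] using mem_ball.mp hy
        linarith
      rw [Real.norm_eq_abs, abs_mul, abs_neg, abs_of_pos (Real.exp_pos _)]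
      nlinarith [abs_nonneg y, Real.exp_pos (-y ^ 2 * (1 + t ^ 2) / 2)])
    intervalIntegrable_const
    (Filter.Eventually.of_forall fun t => fun _ y _ => by
      have c0 : (1 + t ^ 2 : ℝ) ≠ 0 := by positivity
      have h0 : HasDerivAt (fun y : ℝ => y ^ 2) (2 * y) y := by
        simpa using hasDerivAt_pow 2 y
      have h1 : HasDerivAt (fun y : ℝ => (-(1 + t ^ 2) / 2) * y ^ 2)
          ((-(1 + t ^ 2) / 2) * (2 * y)) y := h0.const_mul _
      have h1' : HasDerivAt (fun y : ℝ => -y ^ 2 * (1 + t ^ 2) / 2)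
          ((-(1 + t ^ 2) / 2) * (2 * y)) y :=
        h1.congr_of_eventuallyEq (Filter.Eventually.of_forall fun z => by ring)
      have d3 := h1'.exp.div_const (1 + t ^ 2)
      convert d3 using 1
      · rfl
      field_simp)
  have eval : (∫ x in (0:ℝ)..1, -h * Real.exp (-h ^ 2 * (1 + x ^ 2) / 2))
      = -Real.exp (-h ^ 2 / 2) * ∫ u in (0:ℝ)..h, Real.exp (-u ^ 2 / 2) := by
    rcases eq_or_ne h 0 with rfl | hne
    · simp
    · have split : ∀ x : ℝ, -h * Real.exp (-h ^ 2 * (1 + x ^ 2) / 2)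
          = (-h * Real.exp (-h ^ 2 / 2)) * Real.exp (-(x * h) ^ 2 / 2) := by
        intro x
        have hAB : -h ^ 2 * (1 + x ^ 2) / 2 = -h ^ 2 / 2 + -(x * h) ^ 2 / 2 := by ring
        rw [hAB, Real.exp_add]; ring
      simp_rw [split]
      rw [intervalIntegral.integral_const_mul]
      rw [intervalIntegral.integral_comp_mul_right (fun u : ℝ => Real.exp (-u ^ 2 / 2)) hne]
      simp only [zero_mul, one_mul, smul_eq_mul]
      field_simp
  rw [← eval]
  exact key.2

lemma algebra_aux (s e i c : ℝ) (hs : s ^ 2 = 2 * π) (hs0 : s ≠ 0)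
    (hc : c = 1 / 2 + i / s) :
    (0 : ℝ) = 1 / (2 * π) * (-e * i) - (1 / 2 * (e / s) * (1 - c) + 1 / 2 * c * -(e / s)) := by
  subst hc
  rw [← hs]
  field_simp
  ring

lemma deriv_lemma (h : ℝ) :
    HasDerivAt (fun y : ℝ => OwenT y 1 - 1 / 2 * stdCdf y * (1 - stdCdf y)) 0 h := by
  have s2 : Real.sqrt (2 * π) ^ 2 = 2 * π := Real.sq_sqrt (by positivity)
  have sne : Real.sqrt (2 * π) ≠ 0 := by positivity
  have d1 := (owen_integral_hasDerivAt h).const_mul (1 / (2 * π))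
  have dA : HasDerivAt (fun y : ℝ => 1 / 2 * stdCdf y)
      (1 / 2 * (Real.exp (-h ^ 2 / 2) / Real.sqrt (2 * π))) h :=
    (stdCdf_hasDerivAt h).const_mul _
  have dB : HasDerivAt (fun y : ℝ => 1 - stdCdf y)
      (0 - Real.exp (-h ^ 2 / 2) / Real.sqrt (2 * π)) h :=
    (hasDerivAt_const h (1 : ℝ)).sub (stdCdf_hasDerivAt h)
  rw [zero_sub] at dB
  have d3 := dA.mul dB
  have final := d1.sub d3
  have hfun : (fun y : ℝ => OwenT y 1 - 1 / 2 * stdCdf y * (1 - stdCdf y))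
      = fun y : ℝ => (1 / (2 * π)) *
        (∫ x in (0:ℝ)..1, Real.exp (-y ^ 2 * (1 + x ^ 2) / 2) / (1 + x ^ 2))
        - 1 / 2 * stdCdf y * (1 - stdCdf y) := by
    funext y; rw [OwenT]
  rw [hfun]
  convert final using 1
  exacts [rfl, rfl, rfl, algebra_aux _ _ _ _ s2 sne (stdCdf_eq h)]

theorem OwenT_one (h : ℝ) :
    OwenT h 1 = (1 / 2) * stdCdf h * (1 - stdCdf h) := by
  have key := is_const_of_deriv_eq_zero (f := fun y : ℝ =>
      OwenT y 1 - 1 / 2 * stdCdf y * (1 - stdCdf y))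
    (fun z => (deriv_lemma z).differentiableAt)
    (fun z => (deriv_lemma z).deriv) h 0
  have h0 : OwenT 0 1 = 1 / 8 := by
    rw [OwenT]
    have heq : EqOn (fun x : ℝ => Real.exp (-(0:ℝ) ^ 2 * (1 + x ^ 2) / 2) / (1 + x ^ 2))
        (fun x : ℝ => 1 / (1 + x ^ 2)) (Set.uIcc 0 1) := by
      intro x _; simp
    rw [intervalIntegral.integral_congr heq, integral_one_div_one_add_sq,
      Real.arctan_one, Real.arctan_zero]
    have pine : (π : ℝ) ≠ 0 := Real.pi_ne_zero
    field_simp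
    ring
  rw [h0, stdCdf_zero] at key
  norm_num at key
  linarith
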